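/- Let A be a real symmetric matrix indexed by a finite nonempty type, and let λ(A) denote its largest eigenvalue. Then (1/β)·log(Tr exp(βA)) converges to λ(A) as β → ∞. -/

import Mathlib

open Matrix Finset

/-- The largest eigenvalue of a Hermitian matrix. -/
noncomputable def maxEig {𝕜 : Type*} [RCLike 𝕜] {n : Type*} [Fintype n] [DecidableEq n]
    {A : Matrix n n 𝕜} (hA : A.IsHermitian) : ℝ := ⨆ i, hA.eigenvalues i

lemma trace_exp_smul_aux {n : Type*} [Fintype n] [DecidableEq n]
    {A : Matrix n n ℝ} (hA : A.IsHermitian) (β : ℝ) :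
    (NormedSpace.exp (β • A)).trace = ∑ i, Real.exp (β * hA.eigenvalues i) := by
  set U := Unitary.toUnits (Matrix.IsHermitian.eigenvectorUnitary hA) with hU
  have hUinv : ((U⁻¹ : (Matrix n n ℝ)ˣ) : Matrix n n ℝ)
      = star ((Matrix.IsHermitian.eigenvectorUnitary hA : unitary (Matrix n n ℝ)) : Matrix n n ℝ) := rfl
  have hspec : β • A = (U : Matrix n n ℝ) *
      diagonal (fun i => β * hA.eigenvalues i) * ((U⁻¹ : (Matrix n n ℝ)ˣ) : Matrix n n ℝ) := by
    rw [hUinv]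
    have h1 : (diagonal (fun i => β * hA.eigenvalues i) : Matrix n n ℝ)
        = β • diagonal (RCLike.ofReal ∘ hA.eigenvalues) := by
      rw [RCLike.ofReal_real_eq_id, ← diagonal_smul]; rfl
    have hUcoe : (U : Matrix n n ℝ)
        = ((Matrix.IsHermitian.eigenvectorUnitary hA : unitary (Matrix n n ℝ)) : Matrix n n ℝ) := rfl
    rw [h1, mul_smul_comm, smul_mul_assoc, hUcoe, ← Unitary.conjStarAlgAut_apply (S := ℝ), ← hA.spectral_theorem]
  rw [hspec, Matrix.exp_units_conj, Matrix.exp_diagonal]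
  rw [trace_mul_cycle]
  have : ((U⁻¹ : (Matrix n n ℝ)ˣ) : Matrix n n ℝ) * (U : Matrix n n ℝ) = 1 := U.inv_mul
  rw [this, one_mul, trace_diagonal]
  refine Finset.sum_congr rfl fun i _ => ?_
  rw [Real.exp_eq_exp_ℝ, Pi.exp_def]

/-- **Low-temperature asymptotics of the free energy.** For a real symmetric matrix `A`,
`(1/β)·log(Tr exp(βA)) → λ(A)` as `β → ∞`. -/
theorem tendsto_log_trace_exp_div {n : Type*} [Fintype n] [DecidableEq n] [Nonempty n]
    {A : Matrix n n ℝ} (hA : A.IsHermitian) :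
    Filter.Tendsto (fun β : ℝ => (1 / β) * Real.log (NormedSpace.exp (β • A)).trace)
      Filter.atTop (nhds (maxEig hA)) := by
  set M := maxEig hA with hM
  obtain ⟨i0, hi0⟩ := Finite.exists_max hA.eigenvalues
  have hMle : ∀ i, hA.eigenvalues i ≤ M := fun i => le_ciSup (Set.Finite.bddAbove (Set.finite_range _)) i
  have hMeq : M = hA.eigenvalues i0 := le_antisymm (ciSup_le hi0) (hMle i0)
  have hcard : (0 : ℝ) < Fintype.card n := by positivity
  -- bounds
  have key : ∀ β : ℝ, 0 < β →
      M ≤ (1 / β) * Real.log (NormedSpace.exp (β • A)).trace ∧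
      (1 / β) * Real.log (NormedSpace.exp (β • A)).trace ≤ M + Real.log (Fintype.card n) / β := by
    intro β hβ
    rw [trace_exp_smul_aux hA β]
    have hlb : Real.exp (β * M) ≤ ∑ i, Real.exp (β * hA.eigenvalues i) := by
      rw [hMeq]
      exact Finset.single_le_sum (f := fun i => Real.exp (β * hA.eigenvalues i))
        (fun i _ => (Real.exp_pos _).le) (Finset.mem_univ i0)
    have hub : ∑ i, Real.exp (β * hA.eigenvalues i) ≤ (Fintype.card n : ℝ) * Real.exp (β * M) := by
      calc ∑ i, Real.exp (β * hA.eigenvalues i) ≤ ∑ _i : n, Real.exp (β * M) :=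
            Finset.sum_le_sum fun i _ => Real.exp_le_exp.2
              (mul_le_mul_of_nonneg_left (hMle i) hβ.le)
        _ = (Fintype.card n : ℝ) * Real.exp (β * M) := by
            rw [Finset.sum_const, card_univ, nsmul_eq_mul]
    have hpos : (0 : ℝ) < ∑ i, Real.exp (β * hA.eigenvalues i) :=
      lt_of_lt_of_le (Real.exp_pos _) hlb
    constructor
    · have := Real.log_le_log (Real.exp_pos _) hlb
      rw [Real.log_exp] at this
      rw [one_div, inv_mul_eq_div, le_div_iff₀ hβ]
      linarith
    · have := Real.log_le_log hpos hub
      rw [Real.log_mul (ne_of_gt hcard) (Real.exp_ne_zero _), Real.log_exp] at this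
      rw [one_div, inv_mul_eq_div, div_le_iff₀ hβ]
      calc Real.log (∑ i, Real.exp (β * hA.eigenvalues i))
          ≤ Real.log (Fintype.card n) + β * M := this
        _ = (M + Real.log (Fintype.card n) / β) * β := by field_simp; ring
  have h0 : Filter.Tendsto (fun β : ℝ => M + Real.log (Fintype.card n) / β)
      Filter.atTop (nhds M) := by
    have h1 : Filter.Tendsto (fun β : ℝ => Real.log (Fintype.card n) / β)
        Filter.atTop (nhds 0) :=
      Filter.Tendsto.div_atTop tendsto_const_nhds Filter.tendsto_id
    simpa using (tendsto_const_nhds (x := M) (f := Filter.atTop (α := ℝ))).add h1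
  refine tendsto_of_tendsto_of_tendsto_of_le_of_le' tendsto_const_nhds h0 ?_ ?_
  · filter_upwards [Filter.eventually_gt_atTop 0] with β hβ using (key β hβ).1
  · filter_upwards [Filter.eventually_gt_atTop 0] with β hβ using (key β hβ).2
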